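/- For a memoryless stationary source X₁,...,Xₙ i.i.d. ~ p_X, any encoder fₙ: 𝒳ⁿ → {1,...,2^{nR}} and decoder gₙ with output X̂ⁿ satisfying (1/n)Σᵢ E[Δ(Xᵢ,X̂ᵢ)] ≤ D and (1/n)Σᵢ d(p_{Xᵢ}, p_{X̂ᵢ}) ≤ P must have rate R ≥ R(D,P), where R(D,P) is the (information) rate-distortion-perception function, provided d is convex in its second argument. -/

import Mathlib

open scoped BigOperators ENNReal
open Finset
set_option maxHeartbeats 1000000

/-- A probability mass function on a finite alphabet. -/
def IsPMF {𝓧 : Type*} [Fintype 𝓧] (p : 𝓧 → ℝ) : Prop :=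
  (∀ x, 0 ≤ p x) ∧ ∑ x, p x = 1

/-- A conditional distribution (channel/kernel) on a finite alphabet. -/
def IsKernel {𝓧 : Type*} [Fintype 𝓧] (K : 𝓧 → 𝓧 → ℝ) : Prop :=
  ∀ x, IsPMF (K x)

/-- Output (marginal) distribution of the reconstruction `X̂`. -/
def outDist {𝓧 : Type*} [Fintype 𝓧] (p : 𝓧 → ℝ) (K : 𝓧 → 𝓧 → ℝ) : 𝓧 → ℝ :=
  fun y => ∑ x, p x * K x y

/-- Expected distortion `E[Δ(X, X̂)]`. -/
def expDistortion {𝓧 : Type*} [Fintype 𝓧] (p : 𝓧 → ℝ) (Δ : 𝓧 → 𝓧 → ℝ)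
    (K : 𝓧 → 𝓧 → ℝ) : ℝ :=
  ∑ x, ∑ y, p x * K x y * Δ x y

/-- Mutual information `I(X; X̂)` in bits (log base 2). -/
noncomputable def mutualInfo {𝓧 : Type*} [Fintype 𝓧] (p : 𝓧 → ℝ) (K : 𝓧 → 𝓧 → ℝ) : ℝ :=
  ∑ x, ∑ y, p x * K x y * Real.logb 2 (K x y / outDist p K y)

/-- The (information) rate-distortion-perception function, in bits. -/
noncomputable def RDP {𝓧 : Type*} [Fintype 𝓧] (p : 𝓧 → ℝ) (Δ : 𝓧 → 𝓧 → ℝ)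
    (d : (𝓧 → ℝ) → (𝓧 → ℝ) → ℝ) (D P : ℝ) : ℝ≥0∞ :=
  sInf { r : ℝ≥0∞ | ∃ K : 𝓧 → 𝓧 → ℝ, IsKernel K ∧ expDistortion p Δ K ≤ D ∧
    d p (outDist p K) ≤ P ∧ r = ENNReal.ofReal (mutualInfo p K) }

/-- The iid (product) distribution of a source sequence X₁,…,Xₙ. -/
def prodPMF {𝓧 : Type*} [Fintype 𝓧] (p : 𝓧 → ℝ) (n : ℕ) : (Fin n → 𝓧) → ℝ :=
  fun x => ∏ i, p (x i)


lemma logsum {ι : Type*} (s : Finset ι) (A B : ι → ℝ)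
    (hA : ∀ i ∈ s, 0 ≤ A i) (hB : ∀ i ∈ s, 0 ≤ B i)
    (hAB : ∀ i ∈ s, 0 < A i → 0 < B i) :
    (∑ i ∈ s, A i) * Real.log ((∑ i ∈ s, A i) / (∑ i ∈ s, B i))
      ≤ ∑ i ∈ s, A i * Real.log (A i / B i) := by
  set SA := ∑ i ∈ s, A i with hSA
  set SB := ∑ i ∈ s, B i with hSB
  rcases eq_or_lt_of_le (Finset.sum_nonneg hA) with h0 | hpos
  · have hz : ∀ i ∈ s, A i = 0 :=
      (Finset.sum_eq_zero_iff_of_nonneg hA).mp h0.symm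
    have : ∑ i ∈ s, A i * Real.log (A i / B i) = 0 :=
      Finset.sum_eq_zero (fun i hi => by rw [hz i hi]; ring)
    rw [this, hSA, ← h0]; simp
  · -- SA > 0
    obtain ⟨i0, hi0, hAi0⟩ : ∃ i ∈ s, 0 < A i := by
      by_contra h
      push_neg at h
      have : SA ≤ 0 := Finset.sum_nonpos (fun i hi => h i hi)
      linarith
    have hSBpos : 0 < SB := by
      have := hAB i0 hi0 hAi0
      have hle : B i0 ≤ SB := Finset.single_le_sum hB hi0
      linarith
    have key : ∀ i ∈ s,
        A i * Real.log (SA / SB) + A i - B i * SA / SB ≤ A i * Real.log (A i / B i) := by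
      intro i hi
      rcases eq_or_lt_of_le (hA i hi) with hz | hApos
      · rw [← hz]
        have : 0 ≤ B i * SA / SB := by
          have := hB i hi
          positivity
        simp only [zero_mul, zero_add]
        linarith [hB i hi]
      · have hBpos := hAB i hi hApos
        have hzpos : 0 < (B i * SA) / (A i * SB) := by positivity
        have hlog := Real.log_le_sub_one_of_pos hzpos
        have hexp : Real.log ((B i * SA) / (A i * SB))
            = Real.log (SA / SB) - Real.log (A i / B i) := by
          rw [Real.log_div (by positivity) (by positivity),
              Real.log_div (by positivity) (by positivity),
              Real.log_div (by positivity) (by positivity),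
              Real.log_mul (by positivity) (by positivity),
              Real.log_mul (by positivity) (by positivity)]
          ring
        rw [hexp] at hlog
        have h2 : A i * (Real.log (SA / SB) - Real.log (A i / B i))
            ≤ A i * ((B i * SA) / (A i * SB) - 1) :=
          mul_le_mul_of_nonneg_left hlog (le_of_lt hApos)
        have h3 : A i * ((B i * SA) / (A i * SB)) = B i * SA / SB := by
          field_simp
        nlinarith [h2, h3]
    have hsum := Finset.sum_le_sum key
    have hfold : ∑ i ∈ s, (A i * Real.log (SA / SB) + A i - B i * SA / SB)
        = SA * Real.log (SA / SB) + SA - SA := by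
      rw [Finset.sum_sub_distrib, Finset.sum_add_distrib, ← Finset.sum_mul, ← hSA]
      have : ∑ i ∈ s, B i * SA / SB = SA := by
        rw [← Finset.sum_div, ← Finset.sum_mul, ← hSB]
        field_simp
      rw [this]
    rw [hfold] at hsum
    linarith

lemma jensen_log {ι : Type*} (s : Finset ι) (p t : ι → ℝ)
    (hp : ∀ i ∈ s, 0 ≤ p i) (hp1 : ∑ i ∈ s, p i = 1)
    (ht : ∀ i ∈ s, 0 ≤ t i) (hpt : ∀ i ∈ s, 0 < p i → 0 < t i) :
    ∑ i ∈ s, p i * Real.log (t i) ≤ Real.log (∑ i ∈ s, p i * t i) := by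
  have hls := logsum s p (fun i => p i * t i) hp
    (fun i hi => mul_nonneg (hp i hi) (ht i hi))
    (fun i hi hpi => mul_pos hpi (hpt i hi hpi))
  rw [hp1] at hls
  have h1 : ∀ i ∈ s, p i * Real.log (p i / (p i * t i)) = - (p i * Real.log (t i)) := by
    intro i hi
    rcases eq_or_lt_of_le (hp i hi) with hz | hpos
    · rw [← hz]; ring
    · have htpos := hpt i hi hpos
      have : p i / (p i * t i) = (t i)⁻¹ := by
        field_simp
      rw [this, Real.log_inv]; ring
  rw [Finset.sum_congr rfl h1, Finset.sum_neg_distrib] at hls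
  have : Real.log (1 / ∑ i ∈ s, p i * t i) = - Real.log (∑ i ∈ s, p i * t i) := by
    rw [one_div, Real.log_inv]
  rw [this] at hls
  linarith

namespace ConverseAux
set_option linter.unusedSectionVars false
variable {𝓧 : Type*} [Fintype 𝓧] [DecidableEq 𝓧]

/-- joint distribution of (X_i, X̂_i) -/
noncomputable def J (p : 𝓧 → ℝ) (n : ℕ) (xh : (Fin n → 𝓧) → Fin n → 𝓧)
    (i : Fin n) (a b : 𝓧) : ℝ :=
  ∑ x : Fin n → 𝓧, if x i = a ∧ xh x i = b then prodPMF p n x else 0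

/-- marginal distribution of X̂_i -/
noncomputable def q (p : 𝓧 → ℝ) (n : ℕ) (xh : (Fin n → 𝓧) → Fin n → 𝓧)
    (i : Fin n) (b : 𝓧) : ℝ :=
  ∑ x : Fin n → 𝓧, if xh x i = b then prodPMF p n x else 0

variable (p : 𝓧 → ℝ) (n : ℕ) (xh : (Fin n → 𝓧) → Fin n → 𝓧)

lemma sum_prod_eq (h : Fin n → 𝓧 → ℝ) :
    ∑ x : Fin n → 𝓧, ∏ i, h i (x i) = ∏ i, ∑ a, h i a := by
  rw [Finset.prod_univ_sum]
  rw [Fintype.piFinset_univ]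

lemma pn_nonneg (hp : IsPMF p) (x : Fin n → 𝓧) : 0 ≤ prodPMF p n x :=
  Finset.prod_nonneg (fun i _ => hp.1 (x i))

lemma pn_sum_one (hp : IsPMF p) : ∑ x : Fin n → 𝓧, prodPMF p n x = 1 := by
  have := sum_prod_eq n (fun _ a => p a)
  simp only [prodPMF]
  rw [this]
  simp [hp.2]

lemma marg (hp : IsPMF p) (i : Fin n) (a : 𝓧) :
    ∑ x : Fin n → 𝓧, (if x i = a then prodPMF p n x else 0) = p a := by
  have key : ∀ x : Fin n → 𝓧,
      (if x i = a then prodPMF p n x else 0)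
        = ∏ j, (fun j c => if j = i then (if c = a then p c else 0) else p c) j (x j) := by
    intro x
    rcases eq_or_ne (x i) a with h | h
    · rw [if_pos h]
      unfold prodPMF
      apply Finset.prod_congr rfl
      intro j _
      rcases eq_or_ne j i with hj | hj
      · subst hj; simp [h]
      · simp [hj]
    · rw [if_neg h]
      symm
      apply Finset.prod_eq_zero (Finset.mem_univ i)
      simp [h]
  rw [Finset.sum_congr rfl (fun x _ => key x),
    sum_prod_eq n (fun j c => if j = i then (if c = a then p c else 0) else p c)]
  rw [Finset.prod_eq_single i]
  · simp
  · intro j _ hj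
    simp [hj, hp.2]
  · simp

lemma J_nonneg (hp : IsPMF p) (i : Fin n) (a b : 𝓧) : 0 ≤ J p n xh i a b :=
  Finset.sum_nonneg (fun x _ => by
    split
    · exact pn_nonneg p n hp x
    · exact le_refl 0)

lemma q_nonneg (hp : IsPMF p) (i : Fin n) (b : 𝓧) : 0 ≤ q p n xh i b :=
  Finset.sum_nonneg (fun x _ => by
    split
    · exact pn_nonneg p n hp x
    · exact le_refl 0)

lemma J_sum_b (hp : IsPMF p) (i : Fin n) (a : 𝓧) :
    ∑ b, J p n xh i a b = p a := by
  unfold J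
  rw [Finset.sum_comm]
  rw [← marg p n hp i a]
  apply Finset.sum_congr rfl
  intro x _
  simp only [ite_and]
  rcases eq_or_ne (x i) a with h | h
  · simp [h]
  · simp [h]

lemma J_sum_a (i : Fin n) (b : 𝓧) :
    ∑ a, J p n xh i a b = q p n xh i b := by
  unfold J q
  rw [Finset.sum_comm]
  apply Finset.sum_congr rfl
  intro x _
  simp only [ite_and]
  rcases eq_or_ne (xh x i) b with h | h
  · simp [h]
  · simp [h]

lemma q_sum_one (hp : IsPMF p) (i : Fin n) : ∑ b, q p n xh i b = 1 := by
  unfold q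
  rw [Finset.sum_comm]
  rw [← pn_sum_one p n hp]
  apply Finset.sum_congr rfl
  intro x _
  simp

lemma J_le_pa (hp : IsPMF p) (i : Fin n) (a b : 𝓧) : J p n xh i a b ≤ p a := by
  rw [← J_sum_b p n xh hp i a]
  exact Finset.single_le_sum (fun c _ => J_nonneg p n xh hp i a c) (Finset.mem_univ b)

lemma J_le_q (hp : IsPMF p) (i : Fin n) (a b : 𝓧) : J p n xh i a b ≤ q p n xh i b := by
  rw [← J_sum_a p n xh i b]
  exact Finset.single_le_sum (fun c _ => J_nonneg p n xh hp i c b) (Finset.mem_univ a)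

lemma pn_le_J (hp : IsPMF p) (i : Fin n) (x : Fin n → 𝓧) :
    prodPMF p n x ≤ J p n xh i (x i) (xh x i) := by
  unfold J
  have : prodPMF p n x = (if x i = x i ∧ xh x i = xh x i then prodPMF p n x else 0) := by simp
  rw [this]
  apply Finset.single_le_sum (f := fun x' => if x' i = x i ∧ xh x' i = xh x i then prodPMF p n x' else 0)
    (fun x' _ => by split; exacts [pn_nonneg p n hp x', le_refl 0]) (Finset.mem_univ x)

lemma pn_le_q (hp : IsPMF p) (i : Fin n) (x : Fin n → 𝓧) :
    prodPMF p n x ≤ q p n xh i (xh x i) :=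
  le_trans (pn_le_J p n xh hp i x) (J_le_q p n xh hp i (x i) (xh x i))

lemma RG1 (i : Fin n) (c : 𝓧 → 𝓧 → ℝ) :
    ∑ a, ∑ b, J p n xh i a b * c a b
      = ∑ x : Fin n → 𝓧, prodPMF p n x * c (x i) (xh x i) := by
  unfold J
  simp only [Finset.sum_mul, ite_mul, zero_mul]
  have step1 : ∀ a : 𝓧, (∑ b, ∑ x : Fin n → 𝓧,
      if x i = a ∧ xh x i = b then prodPMF p n x * c a b else 0)
      = ∑ x : Fin n → 𝓧, ∑ b,
      if x i = a ∧ xh x i = b then prodPMF p n x * c a b else 0 :=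
    fun a => Finset.sum_comm
  rw [Finset.sum_congr rfl (fun a _ => step1 a), Finset.sum_comm]
  apply Finset.sum_congr rfl
  intro x _
  simp [ite_and]


noncomputable def rho (p : 𝓧 → ℝ) (n : ℕ) (xh : (Fin n → 𝓧) → Fin n → 𝓧)
    (y : Fin n → 𝓧) : ℝ :=
  ∑ x : Fin n → 𝓧, if xh x = y then prodPMF p n x else 0

noncomputable def w (p : 𝓧 → ℝ) (n : ℕ) {M : ℕ} (f : (Fin n → 𝓧) → Fin M)
    (m : Fin M) : ℝ :=
  ∑ x : Fin n → 𝓧, if f x = m then prodPMF p n x else 0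

noncomputable def MIi (p : 𝓧 → ℝ) (n : ℕ) (xh : (Fin n → 𝓧) → Fin n → 𝓧)
    (i : Fin n) : ℝ :=
  ∑ a, ∑ b, J p n xh i a b * Real.log (J p n xh i a b / (p a * q p n xh i b))

noncomputable def tfun (p : 𝓧 → ℝ) (n : ℕ) (xh : (Fin n → 𝓧) → Fin n → 𝓧)
    (x : Fin n → 𝓧) : ℝ :=
  rho p n xh (xh x) * ∏ i, (J p n xh i (x i) (xh x i) / q p n xh i (xh x i))


-- new lemmas
lemma rho_nonneg (hp : IsPMF p) (y : Fin n → 𝓧) : 0 ≤ rho p n xh y :=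
  Finset.sum_nonneg (fun x _ => by
    split; exacts [pn_nonneg p n hp x, le_refl 0])

lemma rho_sum_one (hp : IsPMF p) : ∑ y : Fin n → 𝓧, rho p n xh y = 1 := by
  unfold rho
  rw [Finset.sum_comm, ← pn_sum_one p n hp]
  apply Finset.sum_congr rfl
  intro x _
  simp

lemma pn_le_rho (hp : IsPMF p) (x : Fin n → 𝓧) : prodPMF p n x ≤ rho p n xh (xh x) := by
  unfold rho
  have : prodPMF p n x = (if xh x = xh x then prodPMF p n x else 0) := by simp
  rw [this]
  exact Finset.single_le_sum (f := fun x' => if xh x' = xh x then prodPMF p n x' else 0)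
    (fun x' _ => by split; exacts [pn_nonneg p n hp x', le_refl 0])
    (Finset.mem_univ x)

variable {M : ℕ} (f : (Fin n → 𝓧) → Fin M) (g : Fin M → Fin n → 𝓧)

lemma w_nonneg (hp : IsPMF p) (m : Fin M) : 0 ≤ w p n f m :=
  Finset.sum_nonneg (fun x _ => by
    split; exacts [pn_nonneg p n hp x, le_refl 0])

lemma w_sum_one (hp : IsPMF p) : ∑ m, w p n f m = 1 := by
  unfold w
  rw [Finset.sum_comm, ← pn_sum_one p n hp]
  apply Finset.sum_congr rfl
  intro x _
  simp

lemma pn_le_w (hp : IsPMF p) (x : Fin n → 𝓧) : prodPMF p n x ≤ w p n f (f x) := by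
  unfold w
  have : prodPMF p n x = (if f x = f x then prodPMF p n x else 0) := by simp
  rw [this]
  exact Finset.single_le_sum (f := fun x' => if f x' = f x then prodPMF p n x' else 0)
    (fun x' _ => by split; exacts [pn_nonneg p n hp x', le_refl 0])
    (Finset.mem_univ x)

lemma w_le_rho (hp : IsPMF p) (hxh : ∀ x, xh x = g (f x)) (x : Fin n → 𝓧) :
    w p n f (f x) ≤ rho p n xh (xh x) := by
  unfold w rho
  apply Finset.sum_le_sum
  intro x' _
  rcases eq_or_ne (f x') (f x) with h | h
  · rw [if_pos h, if_pos (by rw [hxh x', hxh x, h])]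
  · rw [if_neg h]
    split
    exacts [pn_nonneg p n hp x', le_refl 0]

lemma sum_t_le_one (hp : IsPMF p) : ∑ x : Fin n → 𝓧, tfun p n xh x ≤ 1 := by
  have hstep : ∀ x : Fin n → 𝓧, tfun p n xh x
      = ∑ y : Fin n → 𝓧, if xh x = y then
          rho p n xh y * ∏ i, (J p n xh i (x i) (y i) / q p n xh i (y i)) else 0 := by
    intro x
    rw [Finset.sum_ite_eq]
    simp [tfun]
  calc ∑ x : Fin n → 𝓧, tfun p n xh x
      = ∑ y : Fin n → 𝓧, ∑ x : Fin n → 𝓧, (if xh x = y then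
          rho p n xh y * ∏ i, (J p n xh i (x i) (y i) / q p n xh i (y i)) else 0) := by
        rw [Finset.sum_comm]
        exact Finset.sum_congr rfl (fun x _ => hstep x)
    _ ≤ ∑ y : Fin n → 𝓧, ∑ x : Fin n → 𝓧,
          rho p n xh y * ∏ i, (J p n xh i (x i) (y i) / q p n xh i (y i)) := by
        apply Finset.sum_le_sum; intro y _
        apply Finset.sum_le_sum; intro x _
        split
        · exact le_refl _
        · apply mul_nonneg (rho_nonneg p n xh hp y)
          exact Finset.prod_nonneg (fun i _ =>
            div_nonneg (J_nonneg p n xh hp i (x i) (y i)) (q_nonneg p n xh hp i (y i)))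
    _ ≤ ∑ y : Fin n → 𝓧, rho p n xh y := by
        apply Finset.sum_le_sum; intro y _
        rw [← Finset.mul_sum]
        rw [sum_prod_eq n (fun i a => J p n xh i a (y i) / q p n xh i (y i))]
        have hle1 : ∏ i, (∑ a, J p n xh i a (y i) / q p n xh i (y i)) ≤ 1 := by
          apply Finset.prod_le_one
          · intro i _
            exact Finset.sum_nonneg (fun a _ =>
              div_nonneg (J_nonneg p n xh hp i a (y i)) (q_nonneg p n xh hp i (y i)))
          · intro i _
            rw [← Finset.sum_div, J_sum_a]
            rcases eq_or_ne (q p n xh i (y i)) 0 with h | h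
            · rw [h]; simp
            · rw [div_self h]
        calc rho p n xh y * ∏ i, (∑ a, J p n xh i a (y i) / q p n xh i (y i))
            ≤ rho p n xh y * 1 := mul_le_mul_of_nonneg_left hle1 (rho_nonneg p n xh hp y)
          _ = rho p n xh y := mul_one _
    _ = 1 := rho_sum_one p n xh hp

lemma ppos_of_pn_pos (hp : IsPMF p) (x : Fin n → 𝓧) (hx : 0 < prodPMF p n x) (i : Fin n) :
    0 < p (x i) := by
  rcases eq_or_lt_of_le (hp.1 (x i)) with h | h
  · exfalso
    have : prodPMF p n x = 0 := Finset.prod_eq_zero (Finset.mem_univ i) h.symm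
    linarith
  · exact h

lemma stepB (hp : IsPMF p) (hM : 0 < M) (hxh : ∀ x, xh x = g (f x)) :
    ∑ i, MIi p n xh i ≤ Real.log M := by
  -- rewrite each MIi as a sum over sequences
  have hMIi : ∀ i, MIi p n xh i = ∑ x : Fin n → 𝓧,
      prodPMF p n x * Real.log (J p n xh i (x i) (xh x i)
        / (p (x i) * q p n xh i (xh x i))) := by
    intro i
    exact RG1 p n xh i (fun a b => Real.log (J p n xh i a b / (p a * q p n xh i b)))
  have hswap : ∑ i, MIi p n xh i = ∑ x : Fin n → 𝓧, prodPMF p n x *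
      (∑ i, Real.log (J p n xh i (x i) (xh x i) / (p (x i) * q p n xh i (xh x i)))) := by
    rw [Finset.sum_congr rfl (fun i _ => hMIi i), Finset.sum_comm]
    exact Finset.sum_congr rfl (fun x _ => (Finset.mul_sum _ _ _).symm)
  rw [hswap]
  -- pointwise bound
  have hpoint : ∀ x : Fin n → 𝓧, prodPMF p n x *
      (∑ i, Real.log (J p n xh i (x i) (xh x i) / (p (x i) * q p n xh i (xh x i))))
      ≤ prodPMF p n x * Real.log (tfun p n xh x / prodPMF p n x)
        + prodPMF p n x * Real.log ((w p n f (f x))⁻¹) := by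
    intro x
    rcases eq_or_lt_of_le (pn_nonneg p n hp x) with h0 | hpos
    · rw [← h0]; simp
    · have hJpos : ∀ i, 0 < J p n xh i (x i) (xh x i) :=
        fun i => lt_of_lt_of_le hpos (pn_le_J p n xh hp i x)
      have hqpos : ∀ i, 0 < q p n xh i (xh x i) :=
        fun i => lt_of_lt_of_le hpos (pn_le_q p n xh hp i x)
      have hppos : ∀ i, 0 < p (x i) := ppos_of_pn_pos p n hp x hpos
      have hrhopos : 0 < rho p n xh (xh x) := lt_of_lt_of_le hpos (pn_le_rho p n xh hp x)
      have hwpos : 0 < w p n f (f x) := lt_of_lt_of_le hpos (pn_le_w p n f hp x)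
      have hwrho : w p n f (f x) ≤ rho p n xh (xh x) := w_le_rho p n xh f g hp hxh x
      -- identity
      have hiden : ∑ i, Real.log (J p n xh i (x i) (xh x i)
            / (p (x i) * q p n xh i (xh x i)))
          = Real.log (tfun p n xh x / prodPMF p n x)
            + Real.log ((rho p n xh (xh x))⁻¹) := by
        have hL : ∀ i, Real.log (J p n xh i (x i) (xh x i)
              / (p (x i) * q p n xh i (xh x i)))
            = Real.log (J p n xh i (x i) (xh x i) / q p n xh i (xh x i))
              - Real.log (p (x i)) := by
          intro i
          rw [Real.log_div (ne_of_gt (hJpos i))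
              (ne_of_gt (mul_pos (hppos i) (hqpos i))),
            Real.log_mul (ne_of_gt (hppos i)) (ne_of_gt (hqpos i)),
            Real.log_div (ne_of_gt (hJpos i)) (ne_of_gt (hqpos i))]
          ring
        have hprodpos : 0 < ∏ i, (J p n xh i (x i) (xh x i) / q p n xh i (xh x i)) :=
          Finset.prod_pos (fun i _ => div_pos (hJpos i) (hqpos i))
        have hT : Real.log (tfun p n xh x / prodPMF p n x)
            = Real.log (rho p n xh (xh x))
              + (∑ i, Real.log (J p n xh i (x i) (xh x i) / q p n xh i (xh x i)))
              - Real.log (prodPMF p n x) := by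
          unfold tfun
          rw [Real.log_div (by positivity) (ne_of_gt hpos),
            Real.log_mul (ne_of_gt hrhopos) (ne_of_gt hprodpos),
            Real.log_prod (fun i _ => ne_of_gt (div_pos (hJpos i) (hqpos i)))]
        have hpn : Real.log (prodPMF p n x) = ∑ i, Real.log (p (x i)) := by
          unfold prodPMF
          rw [Real.log_prod (fun i _ => ne_of_gt (hppos i))]
        rw [Finset.sum_congr rfl (fun i _ => hL i), Finset.sum_sub_distrib, hT, hpn,
          Real.log_inv]
        ring
      rw [hiden, mul_add]
      have : Real.log ((rho p n xh (xh x))⁻¹) ≤ Real.log ((w p n f (f x))⁻¹) := by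
        apply Real.log_le_log (by positivity)
        exact inv_anti₀ hwpos hwrho
      have := mul_le_mul_of_nonneg_left this (le_of_lt hpos)
      linarith
  calc ∑ x : Fin n → 𝓧, prodPMF p n x *
        (∑ i, Real.log (J p n xh i (x i) (xh x i) / (p (x i) * q p n xh i (xh x i))))
      ≤ ∑ x : Fin n → 𝓧, (prodPMF p n x * Real.log (tfun p n xh x / prodPMF p n x)
          + prodPMF p n x * Real.log ((w p n f (f x))⁻¹)) :=
        Finset.sum_le_sum (fun x _ => hpoint x)
    _ = (∑ x : Fin n → 𝓧, prodPMF p n x * Real.log (tfun p n xh x / prodPMF p n x))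
        + ∑ x : Fin n → 𝓧, prodPMF p n x * Real.log ((w p n f (f x))⁻¹) :=
        Finset.sum_add_distrib
    _ ≤ 0 + Real.log M := by
        have hpart1 : (∑ x : Fin n → 𝓧, prodPMF p n x * Real.log (tfun p n xh x / prodPMF p n x)) ≤ 0 := by
          have htnn : ∀ x : Fin n → 𝓧, 0 ≤ tfun p n xh x := by
            intro x
            apply mul_nonneg (rho_nonneg p n xh hp (xh x))
            exact Finset.prod_nonneg (fun i _ =>
              div_nonneg (J_nonneg p n xh hp i (x i) (xh x i)) (q_nonneg p n xh hp i (xh x i)))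
          have htpos : ∀ x : Fin n → 𝓧, 0 < prodPMF p n x → 0 < tfun p n xh x := by
            intro x hx
            apply mul_pos (lt_of_lt_of_le hx (pn_le_rho p n xh hp x))
            exact Finset.prod_pos (fun i _ => div_pos
              (lt_of_lt_of_le hx (pn_le_J p n xh hp i x))
              (lt_of_lt_of_le hx (pn_le_q p n xh hp i x)))
          have hj := jensen_log Finset.univ (prodPMF p n)
            (fun x => tfun p n xh x / prodPMF p n x)
            (fun x _ => pn_nonneg p n hp x) (pn_sum_one p n hp)
            (fun x _ => div_nonneg (htnn x) (pn_nonneg p n hp x))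
            (fun x _ hx => div_pos (htpos x hx) hx)
          have hS1 : ∑ x : Fin n → 𝓧, prodPMF p n x * (tfun p n xh x / prodPMF p n x) ≤ 1 := by
            calc ∑ x : Fin n → 𝓧, prodPMF p n x * (tfun p n xh x / prodPMF p n x)
                ≤ ∑ x : Fin n → 𝓧, tfun p n xh x := by
                  apply Finset.sum_le_sum
                  intro x _
                  rcases eq_or_lt_of_le (pn_nonneg p n hp x) with h0 | hx
                  · rw [← h0, zero_mul]; exact htnn x
                  · rw [mul_div_cancel₀ _ (ne_of_gt hx)]
              _ ≤ 1 := sum_t_le_one p n xh hp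
          have hS0 : 0 ≤ ∑ x : Fin n → 𝓧, prodPMF p n x * (tfun p n xh x / prodPMF p n x) :=
            Finset.sum_nonneg (fun x _ => mul_nonneg (pn_nonneg p n hp x)
              (div_nonneg (htnn x) (pn_nonneg p n hp x)))
          calc ∑ x : Fin n → 𝓧, prodPMF p n x * Real.log (tfun p n xh x / prodPMF p n x)
              ≤ Real.log (∑ x : Fin n → 𝓧, prodPMF p n x * (tfun p n xh x / prodPMF p n x)) := hj
            _ ≤ 0 := Real.log_nonpos hS0 hS1
        have hpart2 : (∑ x : Fin n → 𝓧, prodPMF p n x * Real.log ((w p n f (f x))⁻¹))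
            ≤ Real.log M := by
          have hregroup : ∑ x : Fin n → 𝓧, prodPMF p n x * Real.log ((w p n f (f x))⁻¹)
              = ∑ m, w p n f m * Real.log ((w p n f m)⁻¹) := by
            have h1 : ∀ x : Fin n → 𝓧, prodPMF p n x * Real.log ((w p n f (f x))⁻¹)
                = ∑ m, (if f x = m then prodPMF p n x * Real.log ((w p n f m)⁻¹) else 0) := by
              intro x
              rw [Finset.sum_ite_eq]
              simp
            rw [Finset.sum_congr rfl (fun x _ => h1 x), Finset.sum_comm]
            apply Finset.sum_congr rfl
            intro m _
            unfold w
            rw [Finset.sum_mul]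
            apply Finset.sum_congr rfl
            intro x _
            simp only [ite_mul, zero_mul]
          rw [hregroup]
          have hj := jensen_log Finset.univ (w p n f) (fun m => (w p n f m)⁻¹)
            (fun m _ => w_nonneg p n f hp m) (w_sum_one p n f hp)
            (fun m _ => inv_nonneg.mpr (w_nonneg p n f hp m))
            (fun m _ hm => inv_pos.mpr hm)
          have hSM : ∑ m, w p n f m * (w p n f m)⁻¹ ≤ (M : ℝ) := by
            calc ∑ m, w p n f m * (w p n f m)⁻¹ ≤ ∑ _m : Fin M, (1 : ℝ) := by
                  apply Finset.sum_le_sum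
                  intro m _
                  rcases eq_or_ne (w p n f m) 0 with h | h
                  · rw [h]; simp
                  · rw [mul_inv_cancel₀ h]
              _ = (M : ℝ) := by simp
          have hlogM : Real.log (∑ m, w p n f m * (w p n f m)⁻¹) ≤ Real.log M := by
            rcases le_or_gt (∑ m, w p n f m * (w p n f m)⁻¹) 1 with h | h
            · have h0 : 0 ≤ ∑ m, w p n f m * (w p n f m)⁻¹ :=
                Finset.sum_nonneg (fun m _ => mul_nonneg (w_nonneg p n f hp m)
                  (inv_nonneg.mpr (w_nonneg p n f hp m)))
              calc Real.log (∑ m, w p n f m * (w p n f m)⁻¹) ≤ 0 := Real.log_nonpos h0 h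
                _ ≤ Real.log M := Real.log_nonneg (by exact_mod_cast hM)
            · exact Real.log_le_log (by linarith) hSM
          exact le_trans hj hlogM
        exact add_le_add hpart1 hpart2
    _ = Real.log M := by ring


variable {𝓧 : Type*} [Fintype 𝓧] [DecidableEq 𝓧] (p : 𝓧 → ℝ) (n : ℕ)
  (xh : (Fin n → 𝓧) → Fin n → 𝓧)

noncomputable def Kav (p : 𝓧 → ℝ) (n : ℕ) (xh : (Fin n → 𝓧) → Fin n → 𝓧)
    (a b : 𝓧) : ℝ :=
  if p a = 0 then p b else ((n : ℝ)⁻¹ * ∑ i, J p n xh i a b) / p a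

lemma J_zero_of_pa (hp : IsPMF p) {a : 𝓧} (h : p a = 0) (i : Fin n) (b : 𝓧) :
    J p n xh i a b = 0 :=
  le_antisymm (h ▸ J_le_pa p n xh hp i a b) (J_nonneg p n xh hp i a b)

lemma pa_mul_Kav (hp : IsPMF p) (a b : 𝓧) :
    p a * Kav p n xh a b = (n : ℝ)⁻¹ * ∑ i, J p n xh i a b := by
  unfold Kav
  rcases eq_or_ne (p a) 0 with h | h
  · rw [if_pos h, h, zero_mul]
    rw [Finset.sum_eq_zero (fun i _ => J_zero_of_pa p n xh hp h i b)]
    ring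
  · rw [if_neg h, mul_div_cancel₀ _ h]

lemma Kav_nonneg (hp : IsPMF p) (a b : 𝓧) : 0 ≤ Kav p n xh a b := by
  unfold Kav
  split
  · exact hp.1 b
  · apply div_nonneg _ (hp.1 a)
    apply mul_nonneg (by positivity)
    exact Finset.sum_nonneg (fun i _ => J_nonneg p n xh hp i a b)

lemma Kav_sum_one (hp : IsPMF p) (hn : 0 < n) (a : 𝓧) :
    ∑ b, Kav p n xh a b = 1 := by
  unfold Kav
  rcases eq_or_ne (p a) 0 with h | h
  · simp only [if_pos h]
    exact hp.2
  · simp only [if_neg h]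
    rw [← Finset.sum_div, ← Finset.mul_sum, Finset.sum_comm]
    rw [Finset.sum_congr rfl (fun i (_ : i ∈ Finset.univ) => J_sum_b p n xh hp i a)]
    rw [Finset.sum_const, Finset.card_univ, Fintype.card_fin, nsmul_eq_mul]
    have hn' : (n : ℝ) ≠ 0 := Nat.cast_ne_zero.mpr (ne_of_gt hn)
    field_simp

noncomputable def outAvg (p : 𝓧 → ℝ) (n : ℕ) (xh : (Fin n → 𝓧) → Fin n → 𝓧)
    (b : 𝓧) : ℝ := (n : ℝ)⁻¹ * ∑ i, q p n xh i b

lemma outDist_Kav (hp : IsPMF p) (b : 𝓧) :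
    ∑ a, p a * Kav p n xh a b = outAvg p n xh b := by
  rw [Finset.sum_congr rfl (fun a (_ : a ∈ Finset.univ) => pa_mul_Kav p n xh hp a b)]
  unfold outAvg
  rw [← Finset.mul_sum, Finset.sum_comm]
  rw [Finset.sum_congr rfl (fun i (_ : i ∈ Finset.univ) => J_sum_a p n xh i b)]

lemma stepA (hp : IsPMF p) (hn : 0 < n) :
    ∑ a, ∑ b, p a * Kav p n xh a b * Real.log (Kav p n xh a b / outAvg p n xh b)
      ≤ (n : ℝ)⁻¹ * ∑ i, MIi p n xh i := by
  have hn' : (n : ℝ) ≠ 0 := Nat.cast_ne_zero.mpr (ne_of_gt hn)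
  have hR : (n : ℝ)⁻¹ * ∑ i, MIi p n xh i
      = ∑ a, ∑ b, (n : ℝ)⁻¹ *
          ∑ i, J p n xh i a b * Real.log (J p n xh i a b / (p a * q p n xh i b)) := by
    unfold MIi
    have h1 : ∑ i : Fin n, ∑ a, ∑ b, J p n xh i a b *
          Real.log (J p n xh i a b / (p a * q p n xh i b))
        = ∑ a, ∑ i : Fin n, ∑ b, J p n xh i a b *
          Real.log (J p n xh i a b / (p a * q p n xh i b)) := Finset.sum_comm
    have h2 : ∀ a : 𝓧, ∑ i : Fin n, ∑ b, J p n xh i a b *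
          Real.log (J p n xh i a b / (p a * q p n xh i b))
        = ∑ b, ∑ i : Fin n, J p n xh i a b *
          Real.log (J p n xh i a b / (p a * q p n xh i b)) := fun a => Finset.sum_comm
    rw [h1, Finset.sum_congr rfl (fun a _ => h2 a), Finset.mul_sum]
    exact Finset.sum_congr rfl (fun a _ => Finset.mul_sum _ _ _)
  rw [hR]
  apply Finset.sum_le_sum
  intro a _
  apply Finset.sum_le_sum
  intro b _
  set SA := ∑ i, J p n xh i a b with hSA
  have hSAnn : 0 ≤ SA := Finset.sum_nonneg (fun i _ => J_nonneg p n xh hp i a b)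
  rcases eq_or_lt_of_le hSAnn with h0 | hpos
  · -- SA = 0
    have hz : ∀ i : Fin n, J p n xh i a b = 0 := by
      intro i
      have := (Finset.sum_eq_zero_iff_of_nonneg
        (fun i (_ : i ∈ Finset.univ) => J_nonneg p n xh hp i a b)).mp h0.symm
      exact this i (Finset.mem_univ i)
    rw [pa_mul_Kav p n xh hp a b, ← hSA, ← h0]
    rw [Finset.sum_eq_zero (fun i _ => by rw [hz i]; ring)]
    simp
  · -- SA > 0
    obtain ⟨i0, hi0J⟩ : ∃ i : Fin n, 0 < J p n xh i a b := by
      by_contra hcon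
      push_neg at hcon
      have : SA ≤ 0 := Finset.sum_nonpos (fun i _ => hcon i)
      linarith
    have hpa : 0 < p a := lt_of_lt_of_le hi0J (J_le_pa p n xh hp i0 a b)
    have hq0 : 0 < q p n xh i0 b := lt_of_lt_of_le hi0J (J_le_q p n xh hp i0 a b)
    have hSq : 0 < ∑ i, q p n xh i b :=
      lt_of_lt_of_le hq0 (Finset.single_le_sum
        (fun i _ => q_nonneg p n xh hp i b) (Finset.mem_univ i0))
    set SB := ∑ i, p a * q p n xh i b with hSB
    have hSBval : SB = p a * ∑ i, q p n xh i b := by rw [hSB, ← Finset.mul_sum]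
    have hls := logsum Finset.univ (fun i => J p n xh i a b)
      (fun i => p a * q p n xh i b)
      (fun i _ => J_nonneg p n xh hp i a b)
      (fun i _ => mul_nonneg (le_of_lt hpa) (q_nonneg p n xh hp i b))
      (fun i _ hJ => mul_pos hpa (lt_of_lt_of_le hJ (J_le_q p n xh hp i a b)))
    have hratio : Kav p n xh a b / outAvg p n xh b = SA / SB := by
      unfold Kav outAvg
      rw [if_neg (ne_of_gt hpa), hSBval]
      field_simp
      ring
    rw [pa_mul_Kav p n xh hp a b, ← hSA, hratio, mul_assoc]
    apply mul_le_mul_of_nonneg_left _ (by positivity : (0:ℝ) ≤ (n:ℝ)⁻¹)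
    exact hls


end ConverseAux

open ConverseAux in
/-- STATEMENT 16: converse for a memoryless stationary source. Any encoder
`f : 𝓧ⁿ → {1,…,M}` with `M ≤ 2^{nR}` and decoder `g` whose reconstructions satisfy
`(1/n) Σᵢ E[Δ(Xᵢ, X̂ᵢ)] ≤ D` and `(1/n) Σᵢ d(p_X, p_X̂ᵢ) ≤ P` must have rate
`R ≥ R(D,P)`, provided the divergence `d` is convex in its second argument. -/
theorem converse_memoryless_source {𝓧 : Type*} [Fintype 𝓧] [DecidableEq 𝓧] [Nonempty 𝓧]
    (pX : 𝓧 → ℝ) (hp : IsPMF pX) (Δ : 𝓧 → 𝓧 → ℝ)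
    (d : (𝓧 → ℝ) → (𝓧 → ℝ) → ℝ)
    (hconv : ∀ (p₀ q₁ q₂ : 𝓧 → ℝ), IsPMF p₀ → IsPMF q₁ → IsPMF q₂ →
      ∀ l : ℝ, 0 ≤ l → l ≤ 1 →
        d p₀ (fun z => l * q₁ z + (1 - l) * q₂ z) ≤ l * d p₀ q₁ + (1 - l) * d p₀ q₂)
    (n M : ℕ) (hn : 0 < n) (hM : 0 < M) (R D P : ℝ)
    (hrate : (M : ℝ) ≤ (2 : ℝ) ^ ((n : ℝ) * R))
    (f : (Fin n → 𝓧) → Fin M) (g : Fin M → Fin n → 𝓧)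
    (hD : (1 / (n : ℝ)) * ∑ i : Fin n,
      (∑ x : Fin n → 𝓧, prodPMF pX n x * Δ (x i) (g (f x) i)) ≤ D)
    (hP : (1 / (n : ℝ)) * ∑ i : Fin n,
      d pX (fun y => ∑ x : Fin n → 𝓧, if g (f x) i = y then prodPMF pX n x else 0) ≤ P) :
    RDP pX Δ d D P ≤ ENNReal.ofReal R := by
  classical
  classical
  set xh : (Fin n → 𝓧) → Fin n → 𝓧 := fun x => g (f x) with hxh
  have hn' : (n : ℝ) ≠ 0 := Nat.cast_ne_zero.mpr (ne_of_gt hn)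
  set K := Kav pX n xh with hK
  -- kernel
  have hker : IsKernel K := fun a =>
    ⟨fun b => Kav_nonneg pX n xh hp a b, Kav_sum_one pX n xh hp hn a⟩
  -- output distribution
  have hout : outDist pX K = outAvg pX n xh := by
    funext b
    exact outDist_Kav pX n xh hp b
  -- distortion
  have hdist : expDistortion pX Δ K ≤ D := by
    have : expDistortion pX Δ K
        = (n : ℝ)⁻¹ * ∑ i : Fin n,
            (∑ x : Fin n → 𝓧, prodPMF pX n x * Δ (x i) (xh x i)) := by
      unfold expDistortion
      have h1 : ∀ a b : 𝓧, pX a * K a b * Δ a b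
          = (n : ℝ)⁻¹ * ∑ i : Fin n, J pX n xh i a b * Δ a b := by
        intro a b
        rw [hK, pa_mul_Kav pX n xh hp a b, mul_assoc, Finset.sum_mul]
      calc ∑ a, ∑ b, pX a * K a b * Δ a b
          = ∑ a, ∑ b, (n : ℝ)⁻¹ * ∑ i : Fin n, J pX n xh i a b * Δ a b := by
            exact Finset.sum_congr rfl (fun a _ => Finset.sum_congr rfl (fun b _ => h1 a b))
        _ = (n : ℝ)⁻¹ * ∑ i : Fin n, ∑ a, ∑ b, J pX n xh i a b * Δ a b := by
            have e1 : ∀ a : 𝓧, ∑ b, (n : ℝ)⁻¹ * ∑ i : Fin n, J pX n xh i a b * Δ a b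
                = (n : ℝ)⁻¹ * ∑ i : Fin n, ∑ b, J pX n xh i a b * Δ a b := by
              intro a
              rw [← Finset.mul_sum]
              congr 1
              exact Finset.sum_comm
            rw [Finset.sum_congr rfl (fun a _ => e1 a), ← Finset.mul_sum]
            congr 1
            exact Finset.sum_comm
        _ = (n : ℝ)⁻¹ * ∑ i : Fin n,
              (∑ x : Fin n → 𝓧, prodPMF pX n x * Δ (x i) (xh x i)) := by
            congr 1
            exact Finset.sum_congr rfl (fun i _ => RG1 pX n xh i Δ)
    rw [this]
    rw [one_div] at hD
    exact hD
  -- perception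
  have hq_pmf : ∀ i : Fin n, IsPMF (fun b => q pX n xh i b) :=
    fun i => ⟨fun b => q_nonneg pX n xh hp i b, q_sum_one pX n xh hp i⟩
  have hperc : d pX (outDist pX K) ≤ P := by
    have hSconv : Convex ℝ {r : 𝓧 → ℝ | IsPMF r} := by
      intro x hx y hy a b ha hb hab
      constructor
      · intro z
        have := hx.1 z; have := hy.1 z
        simp only [Pi.add_apply, Pi.smul_apply, smul_eq_mul]
        positivity
      · simp only [Pi.add_apply, Pi.smul_apply, smul_eq_mul]
        rw [Finset.sum_add_distrib, ← Finset.mul_sum, ← Finset.mul_sum, hx.2, hy.2]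
        simpa using hab
    have hCO : ConvexOn ℝ {r : 𝓧 → ℝ | IsPMF r} (d pX) := by
      refine ⟨hSconv, ?_⟩
      intro q1 hq1 q2 hq2 a b ha hb hab
      have hb' : b = 1 - a := by linarith
      have := hconv pX q1 q2 hp hq1 hq2 a ha (by linarith)
      have harg : a • q1 + b • q2 = fun z => a * q1 z + (1 - a) * q2 z := by
        funext z
        simp only [Pi.add_apply, Pi.smul_apply, smul_eq_mul, hb']
      rw [harg, hb']
      exact this
    have hws : ∑ _i : Fin n, (n : ℝ)⁻¹ = 1 := by
      rw [Finset.sum_const, Finset.card_univ, Fintype.card_fin, nsmul_eq_mul]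
      field_simp
    have hjen := hCO.map_sum_le (t := Finset.univ)
      (w := fun _ : Fin n => (n : ℝ)⁻¹) (p := fun i => (fun b => q pX n xh i b))
      (fun i _ => by positivity) hws (fun i _ => hq_pmf i)
    have hfun : ∑ i : Fin n, (n : ℝ)⁻¹ • (fun b => q pX n xh i b)
        = outDist pX K := by
      funext b
      rw [hout]
      unfold outAvg
      rw [Finset.sum_apply, Finset.mul_sum]
      apply Finset.sum_congr rfl
      intro i _
      simp
    rw [hfun] at hjen
    apply le_trans hjen
    have h2 : ∑ i : Fin n, (n : ℝ)⁻¹ * d pX (fun b => q pX n xh i b) ≤ P := by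
      have heq : ∑ i : Fin n, (n : ℝ)⁻¹ * d pX (fun b => q pX n xh i b)
          = (1 / (n : ℝ)) * ∑ i : Fin n,
            d pX (fun y => ∑ x : Fin n → 𝓧, if g (f x) i = y then prodPMF pX n x else 0) := by
        rw [one_div, Finset.mul_sum]
        apply Finset.sum_congr rfl
        intro i _
        rfl
      rw [heq]
      exact hP
    exact h2
  -- mutual information
  have hmi : mutualInfo pX K ≤ R := by
    have hnat : mutualInfo pX K = (∑ a, ∑ b, pX a * K a b *
        Real.log (K a b / outDist pX K b)) / Real.log 2 := by
      unfold mutualInfo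
      rw [Finset.sum_div]
      apply Finset.sum_congr rfl
      intro a _
      rw [Finset.sum_div]
      apply Finset.sum_congr rfl
      intro b _
      rw [Real.logb, mul_div_assoc]
    have hstepA : ∑ a, ∑ b, pX a * K a b * Real.log (K a b / outDist pX K b)
        ≤ (n : ℝ)⁻¹ * ∑ i, MIi pX n xh i := by
      rw [hout]
      exact stepA pX n xh hp hn
    have hstepB : ∑ i, MIi pX n xh i ≤ Real.log M :=
      stepB pX n xh f g hp hM (fun x => rfl)
    have hlogM : Real.log M ≤ (n : ℝ) * R * Real.log 2 := by
      calc Real.log M ≤ Real.log ((2 : ℝ) ^ ((n : ℝ) * R)) :=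
            Real.log_le_log (by exact_mod_cast hM) hrate
        _ = (n : ℝ) * R * Real.log 2 := Real.log_rpow (by norm_num) _
    have hchain : ∑ a, ∑ b, pX a * K a b * Real.log (K a b / outDist pX K b)
        ≤ R * Real.log 2 := by
      calc ∑ a, ∑ b, pX a * K a b * Real.log (K a b / outDist pX K b)
          ≤ (n : ℝ)⁻¹ * ∑ i, MIi pX n xh i := hstepA
        _ ≤ (n : ℝ)⁻¹ * Real.log M := by
            apply mul_le_mul_of_nonneg_left hstepB (by positivity)
        _ ≤ (n : ℝ)⁻¹ * ((n : ℝ) * R * Real.log 2) := by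
            apply mul_le_mul_of_nonneg_left hlogM (by positivity)
        _ = R * Real.log 2 := by field_simp
    rw [hnat]
    rw [div_le_iff₀ (Real.log_pos (by norm_num))]
    exact hchain
  -- conclude
  have hmem : ENNReal.ofReal (mutualInfo pX K) ∈
      { r : ℝ≥0∞ | ∃ K' : 𝓧 → 𝓧 → ℝ, IsKernel K' ∧ expDistortion pX Δ K' ≤ D ∧
        d pX (outDist pX K') ≤ P ∧ r = ENNReal.ofReal (mutualInfo pX K') } :=
    ⟨K, hker, hdist, hperc, rfl⟩
  exact le_trans (sInf_le hmem) (ENNReal.ofReal_le_ofReal hmi)
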